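/- Let P be a transmission system on a finite graph X, assigning to each directed edge e⃗ from v to w an n(w)×n(v) complex matrix P(e⃗). If λ is an eigenvalue of the transmission graph Laplacian Δ^P, then |λ − 1| ≤ max over directed edges e⃗ of the operator norm ‖P(e⃗)‖. -/

import Mathlib

open Finset

/-- A finite graph presented by its set of directed edges: `op` reverses a
directed edge, `i` and `t` give the initial and terminal vertices. -/
structure DGraph (V : Type) where
  E : Type
  [fE : Fintype E]
  [dE : DecidableEq E]
  op : E → E
  op_op : ∀ e, op (op e) = e
  i : E → V
  t : E → V
  i_op : ∀ e, i (op e) = t e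
  t_op : ∀ e, t (op e) = i e

attribute [instance] DGraph.fE DGraph.dE

/-- The degree of a vertex: the number of directed edges terminating there. -/
def DGraph.deg {V : Type} [DecidableEq V] (G : DGraph V) (w : V) : ℕ :=
  (Finset.univ.filter (fun e => G.t e = w)).card

/-- A transmission system on a graph, presented in assembled ("big matrix")
form: the data banks `ℂ^{n(v)}` at the vertices are the fibers of `π : B → V`,
and the transmission matrix `P e` of a directed edge `e` is supported on the
block (fiber of `t e`) × (fiber of `i e`). -/
def IsTransmission {V B : Type} (G : DGraph V) (π : B → V)
    (P : G.E → Matrix B B ℂ) : Prop :=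
  ∀ e b b', P e b b' ≠ 0 → π b = G.t e ∧ π b' = G.i e

/-- The transmission graph Laplacian
`(Δ^P f)(w) = f(w) - Σ_{e : t(e)=w} (d_w d_{i(e)})^{-1/2} P(e) f(i(e))`. -/
noncomputable def transLap {V B : Type} [DecidableEq V] [Fintype B]
    (G : DGraph V) (π : B → V) (P : G.E → Matrix B B ℂ)
    (f : B → ℂ) : B → ℂ := fun b =>
  f b - ∑ e ∈ Finset.univ.filter (fun e => G.t e = π b),
    (Real.sqrt ((G.deg (π b) : ℝ) * (G.deg (G.i e) : ℝ)) : ℂ)⁻¹ *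
      ∑ b', P e b b' * f b'

lemma matrix_form_bound {B : Type} [Fintype B] [DecidableEq B] (A : Matrix B B ℂ)
    (x y : EuclideanSpace ℂ B) :
    ‖∑ b, (starRingEnd ℂ) (x b) * ∑ b', A b b' * y b'‖ ≤
      ‖Matrix.toEuclideanCLM (𝕜 := ℂ) A‖ * ‖x‖ * ‖y‖ := by
  have h1 : (∑ b, (starRingEnd ℂ) (x b) * ∑ b', A b b' * y b') =
      inner ℂ x (Matrix.toEuclideanCLM (𝕜 := ℂ) A y) := by
    simp [PiLp.inner_apply, RCLike.inner_apply]
    exact Finset.sum_congr rfl fun i _ => mul_comm _ _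
  rw [h1]
  calc ‖(inner ℂ x (Matrix.toEuclideanCLM (𝕜 := ℂ) A y) : ℂ)‖
      ≤ ‖x‖ * ‖Matrix.toEuclideanCLM (𝕜 := ℂ) A y‖ := norm_inner_le_norm _ _
    _ ≤ ‖x‖ * (‖Matrix.toEuclideanCLM (𝕜 := ℂ) A‖ * ‖y‖) := by
        gcongr; exact ContinuousLinearMap.le_opNorm _ _
    _ = ‖Matrix.toEuclideanCLM (𝕜 := ℂ) A‖ * ‖x‖ * ‖y‖ := by ring

/-- If λ is an eigenvalue of the transmission graph Laplacian Δ^P then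
|λ - 1| ≤ max over directed edges of the operator norm ‖P(e)‖. -/
theorem transLap_eigenvalue_dist_one_le {V B : Type} [Fintype V] [DecidableEq V]
    [Fintype B] [DecidableEq B]
    (G : DGraph V) (π : B → V) (P : G.E → Matrix B B ℂ)
    (hP : IsTransmission G π P) (hdeg : ∀ v, 0 < G.deg v)
    (lam : ℂ) (f : B → ℂ) (hf : f ≠ 0)
    (heig : transLap G π P f = lam • f) :
    ‖lam - 1‖ ≤ ⨆ e : G.E, ‖Matrix.toEuclideanCLM (𝕜 := ℂ) (P e)‖ := by
  classical
  set C := ⨆ e : G.E, ‖Matrix.toEuclideanCLM (𝕜 := ℂ) (P e)‖ with hCdef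
  have hC : ∀ e, ‖Matrix.toEuclideanCLM (𝕜 := ℂ) (P e)‖ ≤ C :=
    fun e => le_ciSup (f := fun e => ‖Matrix.toEuclideanCLM (𝕜 := ℂ) (P e)‖) (Set.Finite.bddAbove (Set.finite_range _)) e
  obtain ⟨b0, hb0⟩ := Function.ne_iff.mp hf
  obtain ⟨e0, -⟩ := Finset.card_pos.mp (hdeg (π b0))
  have hC0 : 0 ≤ C := le_trans (norm_nonneg _) (hC e0)
  -- the pieces of f at each vertex
  set F : V → EuclideanSpace ℂ B := fun v => WithLp.toLp 2 (fun b => if π b = v then f b else 0) with hFdef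
  have hFv : ∀ v b, F v b = if π b = v then f b else 0 := fun v b => rfl
  set N : ℝ := ∑ b, ‖f b‖ ^ 2 with hNdef
  have hN0 : 0 < N := by
    have hb0' : f b0 ≠ 0 := by simpa using hb0
    have h1 : 0 < ‖f b0‖ ^ 2 := pow_pos (norm_pos_iff.mpr hb0') 2
    exact lt_of_lt_of_le h1 (Finset.single_le_sum (f := fun b => ‖f b‖ ^ 2)
      (fun b _ => by positivity) (mem_univ b0))
  have hFnormsq : ∀ v, ‖F v‖ ^ 2 = ∑ b ∈ univ.filter (fun b => π b = v), ‖f b‖ ^ 2 := by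
    intro v
    rw [EuclideanSpace.norm_eq, Real.sq_sqrt (by positivity), Finset.sum_filter]
    apply Finset.sum_congr rfl
    intro b _
    by_cases h : π b = v <;> simp [hFv, h]
  have hsumF : ∑ v, ‖F v‖ ^ 2 = N := by
    simp_rw [hFnormsq]
    exact Finset.sum_fiberwise _ _ _
  -- degree counting
  have hcount : ∀ h : V → ℝ, ∑ e : G.E, h (G.t e) = ∑ v, (G.deg v : ℝ) * h v := by
    intro h
    rw [← Finset.sum_fiberwise' (univ : Finset G.E) G.t h]
    apply Finset.sum_congr rfl
    intro v _
    rw [Finset.sum_const, nsmul_eq_mul]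
    rfl
  have hsum_t : ∑ e : G.E, ((G.deg (G.t e) : ℝ))⁻¹ * ‖F (G.t e)‖ ^ 2 = N := by
    rw [hcount (fun v => ((G.deg v : ℝ))⁻¹ * ‖F v‖ ^ 2), ← hsumF]
    apply Finset.sum_congr rfl
    intro v _
    have hv : (G.deg v : ℝ) ≠ 0 := Nat.cast_ne_zero.mpr (hdeg v).ne'
    field_simp
  have hsum_i : ∑ e : G.E, ((G.deg (G.i e) : ℝ))⁻¹ * ‖F (G.i e)‖ ^ 2 = N := by
    rw [← hsum_t]
    apply Fintype.sum_equiv (Function.Involutive.toPerm G.op G.op_op)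
    intro e
    show _ = ((G.deg (G.t (G.op e)) : ℝ))⁻¹ * ‖F (G.t (G.op e))‖ ^ 2
    rw [G.t_op]
  -- eigenvalue equation
  have hT : ∀ b, (∑ e ∈ univ.filter (fun e => G.t e = π b),
      (Real.sqrt ((G.deg (π b) : ℝ) * (G.deg (G.i e) : ℝ)) : ℂ)⁻¹ * ∑ b', P e b b' * f b')
      = (1 - lam) * f b := by
    intro b
    have h := congrFun heig b
    simp only [transLap, Pi.smul_apply, smul_eq_mul] at h
    linear_combination -h
  set c : G.E → ℝ := fun e => (Real.sqrt ((G.deg (G.t e) : ℝ) * (G.deg (G.i e) : ℝ)))⁻¹ with hcdef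
  have hc0 : ∀ e, 0 ≤ c e := fun e => by positivity
  set Q : G.E → ℂ := fun e => ∑ b ∈ univ.filter (fun b => G.t e = π b),
      (starRingEnd ℂ) (f b) * ∑ b', P e b b' * f b' with hQdef
  -- key identity
  have key : (1 - lam) * (N : ℂ) = ∑ e : G.E, (c e : ℂ) * Q e := by
    have lhs : (1 - lam) * (N : ℂ) = ∑ b, (starRingEnd ℂ) (f b) * ((1 - lam) * f b) := by
      rw [hNdef]
      push_cast
      rw [Finset.mul_sum]
      apply Finset.sum_congr rfl
      intro b _
      have hb : ((‖f b‖ : ℂ)) ^ 2 = (starRingEnd ℂ) (f b) * f b := by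
        rw [mul_comm, Complex.mul_conj, Complex.normSq_eq_norm_sq]
        push_cast
        ring
      rw [hb]
      ring
    calc (1 - lam) * (N : ℂ)
        = ∑ b, (starRingEnd ℂ) (f b) * ((1 - lam) * f b) := lhs
      _ = ∑ b, ∑ e ∈ univ.filter (fun e => G.t e = π b), (starRingEnd ℂ) (f b) *
            ((Real.sqrt ((G.deg (π b) : ℝ) * (G.deg (G.i e) : ℝ)) : ℂ)⁻¹ *
              ∑ b', P e b b' * f b') := by
          apply Finset.sum_congr rfl
          intro b _
          rw [← hT b, Finset.mul_sum]
      _ = ∑ e : G.E, ∑ b ∈ univ.filter (fun b => G.t e = π b), (starRingEnd ℂ) (f b) *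
            ((Real.sqrt ((G.deg (π b) : ℝ) * (G.deg (G.i e) : ℝ)) : ℂ)⁻¹ *
              ∑ b', P e b b' * f b') := by
          simp_rw [Finset.sum_filter]
          exact Finset.sum_comm
      _ = ∑ e : G.E, (c e : ℂ) * Q e := by
          apply Finset.sum_congr rfl
          intro e _
          rw [hQdef, Finset.mul_sum]
          apply Finset.sum_congr rfl
          intro b hb
          rw [mem_filter] at hb
          rw [hcdef]
          simp only
          rw [← hb.2]
          push_cast
          ring
  -- bounding Q
  have hPy : ∀ e b, (∑ b', P e b b' * (F (G.i e)) b') = ∑ b', P e b b' * f b' := by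
    intro e b
    apply Finset.sum_congr rfl
    intro b' _
    by_cases h : π b' = G.i e
    · rw [hFv, if_pos h]
    · have h0 : P e b b' = 0 := by
        by_contra hne
        exact h (hP e b b' hne).2
      simp [h0]
  have hQe : ∀ e, Q e = ∑ b, (starRingEnd ℂ) ((F (G.t e)) b) *
      ∑ b', P e b b' * (F (G.i e)) b' := by
    intro e
    simp_rw [hPy]
    rw [hQdef]
    simp only
    rw [Finset.sum_filter]
    apply Finset.sum_congr rfl
    intro b _
    rw [hFv]
    by_cases h : π b = G.t e
    · rw [if_pos h, if_pos h.symm]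
    · rw [if_neg h, if_neg (fun hh => h hh.symm), map_zero, zero_mul]
  have hQbound : ∀ e, ‖Q e‖ ≤ C * (‖F (G.t e)‖ * ‖F (G.i e)‖) := by
    intro e
    rw [hQe e]
    calc ‖∑ b, (starRingEnd ℂ) ((F (G.t e)) b) * ∑ b', P e b b' * (F (G.i e)) b'‖
        ≤ ‖Matrix.toEuclideanCLM (𝕜 := ℂ) (P e)‖ * ‖F (G.t e)‖ * ‖F (G.i e)‖ :=
          matrix_form_bound (P e) _ _
      _ ≤ C * (‖F (G.t e)‖ * ‖F (G.i e)‖) := by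
          rw [← mul_assoc]
          gcongr
          exact hC e
  -- Cauchy-Schwarz setup
  set a : G.E → ℝ := fun e => (Real.sqrt (G.deg (G.t e) : ℝ))⁻¹ * ‖F (G.t e)‖ with hadef
  set bb : G.E → ℝ := fun e => (Real.sqrt (G.deg (G.i e) : ℝ))⁻¹ * ‖F (G.i e)‖ with hbbdef
  have ha2 : ∑ e : G.E, a e ^ 2 = N := by
    rw [← hsum_t]
    apply Finset.sum_congr rfl
    intro e _
    rw [hadef]
    simp only
    rw [mul_pow, inv_pow, Real.sq_sqrt (by positivity)]
  have hb2 : ∑ e : G.E, bb e ^ 2 = N := by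
    rw [← hsum_i]
    apply Finset.sum_congr rfl
    intro e _
    rw [hbbdef]
    simp only
    rw [mul_pow, inv_pow, Real.sq_sqrt (by positivity)]
  have hCS : ∑ e : G.E, a e * bb e ≤ N := by
    have h1 := Finset.sum_mul_sq_le_sq_mul_sq univ a bb
    rw [ha2, hb2] at h1
    have h2 : 0 ≤ ∑ e : G.E, a e * bb e :=
      Finset.sum_nonneg fun e _ => mul_nonneg (by positivity) (by positivity)
    nlinarith
  -- put everything together
  have habs : ‖1 - lam‖ * N ≤ C * N := by
    have h1 : ‖(1 - lam) * (N : ℂ)‖ = ‖1 - lam‖ * N := by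
      rw [norm_mul, Complex.norm_real, Real.norm_of_nonneg hN0.le]
    calc ‖1 - lam‖ * N
        = ‖∑ e : G.E, (c e : ℂ) * Q e‖ := by rw [← h1, key]
      _ ≤ ∑ e : G.E, ‖(c e : ℂ) * Q e‖ := norm_sum_le _ _
      _ ≤ ∑ e : G.E, C * (a e * bb e) := by
          apply Finset.sum_le_sum
          intro e _
          rw [norm_mul, Complex.norm_real, Real.norm_of_nonneg (hc0 e)]
          calc c e * ‖Q e‖ ≤ c e * (C * (‖F (G.t e)‖ * ‖F (G.i e)‖)) :=
                mul_le_mul_of_nonneg_left (hQbound e) (hc0 e)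
            _ = C * (a e * bb e) := by
                rw [hcdef, hadef, hbbdef]
                simp only
                rw [Real.sqrt_mul (by positivity), mul_inv]
                ring
      _ = C * ∑ e : G.E, a e * bb e := by rw [Finset.mul_sum]
      _ ≤ C * N := by gcongr
  have hfinal : ‖1 - lam‖ ≤ C := le_of_mul_le_mul_right habs hN0
  rw [norm_sub_rev]
  exact hfinal
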